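/- Let m be a positive integer, let ⋆ be bitwise addition modulo 2 (XOR) on [2^m], let B be a latin square of order 2^m on [2^m] with quasigroup operation ∘, and let 𝓑 = {((p,r),(q,c), (p⋆q, p⋆((q⋆r)∘(p⋆c)))) : p,q,r,c ∈ [2^m]}. Let r1,r2,c1,c2 ∈ [2^m] satisfy r1 ≠ r2, c1 ≠ c2, r1∘c1 ≠ r2∘c2, and r1⋆r2 ≠ c1⋆c2. Set s = (r1∘c1)⋆(r2∘c2), R1=(0,r2), R2=(c1⋆c2, r1), R3=(c1⋆c2⋆s, r2⋆s), R4=(s, r1⋆s), K1=(0,c2), K2=(r1⋆r2, c1), K3=(r1⋆r2⋆s, c2⋆s), K4=(s, c1⋆s). Then 𝓑 contains the eight triples (R1,K1,(0, r2∘c2)), (R1,K2,(r1⋆r2, r1∘c1)), (R2,K1,(c1⋆c2, c1⋆c2⋆(r1∘c1))), (R2,K2,(r1⋆r2⋆c1⋆c2, c1⋆c2⋆(r2∘c2))), (R3,K3,(r1⋆r2⋆c1⋆c2, c1⋆c2⋆(r2∘c2))), (R3,K4,(c1⋆c2, c1⋆c2⋆(r1∘c1))), (R4,K3,(r1⋆r2,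 r1∘c1)), and (R4,K4,(0, r2∘c2)). -/

import Mathlib

/-- `B` is (the quasigroup operation of) a latin square of order `N` on `[N]`. -/
def IsLatinOp (N : ℕ) (B : ℕ → ℕ → ℕ) : Prop :=
  (∀ r c, r < N → c < N → B r c < N) ∧
  (∀ r c₁ c₂, r < N → c₁ < N → c₂ < N → B r c₁ = B r c₂ → c₁ = c₂) ∧
  (∀ r₁ r₂ c, r₁ < N → r₂ < N → c < N → B r₁ c = B r₂ c → r₁ = r₂)

/-- The latin square `𝓑 = {((p,r),(q,c),(p ⋆ q, p ⋆ ((q ⋆ r) ∘ (p ⋆ c))))}` as a set of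
triples. -/
def calB (m : ℕ) (B : ℕ → ℕ → ℕ) : Set ((ℕ × ℕ) × (ℕ × ℕ) × (ℕ × ℕ)) :=
  {t | ∃ p q r c, p < 2 ^ m ∧ q < 2 ^ m ∧ r < 2 ^ m ∧ c < 2 ^ m ∧
    t = ((p, r), (q, c), (p ^^^ q, p ^^^ B (q ^^^ r) (p ^^^ c)))}


private lemma xor_lc (a b c : ℕ) : a ^^^ (b ^^^ c) = b ^^^ (a ^^^ c) := by
  rw [← Nat.xor_assoc, Nat.xor_comm a b, Nat.xor_assoc]

private lemma xor_can (a b : ℕ) : a ^^^ (a ^^^ b) = b := by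
  rw [← Nat.xor_assoc, Nat.xor_self, Nat.zero_xor]

/-- Lemma 3.2: with `s = (r₁ ∘ c₁) ⋆ (r₂ ∘ c₂)`, rows `R₁ = (0,r₂)`,
`R₂ = (c₁ ⋆ c₂, r₁)`, `R₃ = (c₁ ⋆ c₂ ⋆ s, r₂ ⋆ s)`, `R₄ = (s, r₁ ⋆ s)` and columns
`K₁ = (0,c₂)`, `K₂ = (r₁ ⋆ r₂, c₁)`, `K₃ = (r₁ ⋆ r₂ ⋆ s, c₂ ⋆ s)`, `K₄ = (s, c₁ ⋆ s)`,
the latin square `𝓑` contains the stated eight triples. -/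
theorem JB_entries (m : ℕ) (hm : 0 < m) (B : ℕ → ℕ → ℕ)
    (hB : IsLatinOp (2 ^ m) B)
    (r₁ r₂ c₁ c₂ : ℕ) (hr₁ : r₁ < 2 ^ m) (hr₂ : r₂ < 2 ^ m)
    (hc₁ : c₁ < 2 ^ m) (hc₂ : c₂ < 2 ^ m)
    (h₁ : r₁ ≠ r₂) (h₂ : c₁ ≠ c₂) (h₃ : B r₁ c₁ ≠ B r₂ c₂)
    (h₄ : r₁ ^^^ r₂ ≠ c₁ ^^^ c₂) :
    let s := B r₁ c₁ ^^^ B r₂ c₂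
    (((0, r₂), (0, c₂), ((0 : ℕ), B r₂ c₂)) ∈ calB m B) ∧
    (((0, r₂), (r₁ ^^^ r₂, c₁), (r₁ ^^^ r₂, B r₁ c₁)) ∈ calB m B) ∧
    (((c₁ ^^^ c₂, r₁), (0, c₂), (c₁ ^^^ c₂, c₁ ^^^ c₂ ^^^ B r₁ c₁)) ∈ calB m B) ∧
    (((c₁ ^^^ c₂, r₁), (r₁ ^^^ r₂, c₁),
      (r₁ ^^^ r₂ ^^^ c₁ ^^^ c₂, c₁ ^^^ c₂ ^^^ B r₂ c₂)) ∈ calB m B) ∧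
    (((c₁ ^^^ c₂ ^^^ s, r₂ ^^^ s), (r₁ ^^^ r₂ ^^^ s, c₂ ^^^ s),
      (r₁ ^^^ r₂ ^^^ c₁ ^^^ c₂, c₁ ^^^ c₂ ^^^ B r₂ c₂)) ∈ calB m B) ∧
    (((c₁ ^^^ c₂ ^^^ s, r₂ ^^^ s), (s, c₁ ^^^ s),
      (c₁ ^^^ c₂, c₁ ^^^ c₂ ^^^ B r₁ c₁)) ∈ calB m B) ∧
    (((s, r₁ ^^^ s), (r₁ ^^^ r₂ ^^^ s, c₂ ^^^ s),
      (r₁ ^^^ r₂, B r₁ c₁)) ∈ calB m B) ∧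
    (((s, r₁ ^^^ s), (s, c₁ ^^^ s), ((0 : ℕ), B r₂ c₂)) ∈ calB m B) := by
  intro s
  obtain ⟨hb, -, -⟩ := hB
  have hs : s < 2 ^ m := Nat.xor_lt_two_pow (hb _ _ hr₁ hc₁) (hb _ _ hr₂ hc₂)
  have h0 : (0:ℕ) < 2 ^ m := Nat.pow_pos (by norm_num)
  have X : ∀ a b : ℕ, a < 2 ^ m → b < 2 ^ m → a ^^^ b < 2 ^ m := fun a b => Nat.xor_lt_two_pow
  refine ⟨⟨0, 0, r₂, c₂, h0, h0, hr₂, hc₂, ?_⟩,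
    ⟨0, r₁ ^^^ r₂, r₂, c₁, h0, X _ _ hr₁ hr₂, hr₂, hc₁, ?_⟩,
    ⟨c₁ ^^^ c₂, 0, r₁, c₂, X _ _ hc₁ hc₂, h0, hr₁, hc₂, ?_⟩,
    ⟨c₁ ^^^ c₂, r₁ ^^^ r₂, r₁, c₁, X _ _ hc₁ hc₂, X _ _ hr₁ hr₂, hr₁, hc₁, ?_⟩,
    ⟨c₁ ^^^ c₂ ^^^ s, r₁ ^^^ r₂ ^^^ s, r₂ ^^^ s, c₂ ^^^ s,
      X _ _ (X _ _ hc₁ hc₂) hs, X _ _ (X _ _ hr₁ hr₂) hs, X _ _ hr₂ hs, X _ _ hc₂ hs, ?_⟩,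
    ⟨c₁ ^^^ c₂ ^^^ s, s, r₂ ^^^ s, c₁ ^^^ s,
      X _ _ (X _ _ hc₁ hc₂) hs, hs, X _ _ hr₂ hs, X _ _ hc₁ hs, ?_⟩,
    ⟨s, r₁ ^^^ r₂ ^^^ s, r₁ ^^^ s, c₂ ^^^ s,
      hs, X _ _ (X _ _ hr₁ hr₂) hs, X _ _ hr₁ hs, X _ _ hc₂ hs, ?_⟩,
    ⟨s, s, r₁ ^^^ s, c₁ ^^^ s, hs, hs, X _ _ hr₁ hs, X _ _ hc₁ hs, ?_⟩⟩ <;>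
  all_goals simp [Prod.mk.injEq, s, xor_lc, xor_can, Nat.xor_comm, Nat.xor_assoc,
    Nat.xor_self, Nat.xor_zero, Nat.zero_xor]
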